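/- arXiv:cs/0512030 — 4 statements merged into one kernel-verified Lean document; each statement's English description precedes it below -/
import Mathlib

section
/- If A and B are symmetric linear operators on a complex Hilbert space, then for every f in the domain of both AB and BA and all real numbers a, b: ‖(A−a)f‖·‖(B−b)f‖ ≥ (1/2)·√( |⟨(AB−BA)f, f⟩|² + |⟨((A−a)(B−b)+(B−b)(A−a))f, f⟩|² ). -/
/-- Selig's general uncertainty principle for two symmetric operators `A`, `B`:
`‖(A−a)f‖·‖(B−b)f‖ ≥ (1/2)·√(|⟨[A,B]f,f⟩|² + |⟨[A−a,B−b]₊f,f⟩|²)`. -/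
theorem uncertainty_symmetric_operators
    {H : Type*} [NormedAddCommGroup H] [InnerProductSpace ℂ H] [CompleteSpace H]
    (A B : H →ₗ[ℂ] H)
    (hA : ∀ x y : H, (inner ℂ (A x) y : ℂ) = inner ℂ x (A y))
    (hB : ∀ x y : H, (inner ℂ (B x) y : ℂ) = inner ℂ x (B y))
    (f : H) (a b : ℝ) :
    ‖A f - (a : ℂ) • f‖ * ‖B f - (b : ℂ) • f‖ ≥
      (1 / 2) * Real.sqrt
        (‖(inner ℂ (A (B f) - B (A f)) f : ℂ)‖ ^ 2 +
         ‖(inner ℂ ((A (B f - (b : ℂ) • f) - (a : ℂ) • (B f - (b : ℂ) • f)) +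
             (B (A f - (a : ℂ) • f) - (b : ℂ) • (A f - (a : ℂ) • f))) f : ℂ)‖ ^ 2) := by
  set u : H := A f - (a : ℂ) • f with hu
  set v : H := B f - (b : ℂ) • f with hv
  set z : ℂ := inner ℂ u v with hz
  have hA' : ∀ x y : H, (inner ℂ (A x - (a : ℂ) • x) y : ℂ)
      = inner ℂ x (A y - (a : ℂ) • y) := by
    intro x y
    simp only [inner_sub_left, inner_sub_right, inner_smul_left, inner_smul_right,
      Complex.conj_ofReal, hA]
  have hB' : ∀ x y : H, (inner ℂ (B x - (b : ℂ) • x) y : ℂ)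
      = inner ℂ x (B y - (b : ℂ) • y) := by
    intro x y
    simp only [inner_sub_left, inner_sub_right, inner_smul_left, inner_smul_right,
      Complex.conj_ofReal, hB]
  have h1 : (inner ℂ (A (B f) - B (A f)) f : ℂ) = starRingEnd ℂ z - z := by
    have e : A (B f) - B (A f) = (A v - (a : ℂ) • v) - (B u - (b : ℂ) • u) := by
      simp only [hu, hv, map_sub, map_smul, smul_sub]
      module
    rw [e, inner_sub_left, hA' v f, hB' u f, ← hu, ← hv, hz, inner_conj_symm]
  have h2 : (inner ℂ ((A (B f - (b : ℂ) • f) - (a : ℂ) • (B f - (b : ℂ) • f)) +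
      (B (A f - (a : ℂ) • f) - (b : ℂ) • (A f - (a : ℂ) • f))) f : ℂ)
      = starRingEnd ℂ z + z := by
    rw [inner_add_left, ← hu, ← hv, hA' v f, hB' u f, ← hu, ← hv, hz, inner_conj_symm]
  rw [h1, h2]
  have hsq : ‖starRingEnd ℂ z - z‖ ^ 2 + ‖starRingEnd ℂ z + z‖ ^ 2 = (2 * ‖z‖) ^ 2 := by
    simp only [Complex.sq_norm, Complex.normSq_apply, mul_pow,
      Complex.sub_re, Complex.sub_im, Complex.add_re, Complex.add_im, Complex.conj_re,
      Complex.conj_im]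
    ring
  rw [hsq, Real.sqrt_sq (by positivity)]
  have := norm_inner_le_norm (𝕜 := ℂ) u v
  rw [← hz] at this
  linarith
end

section
/- Let 𝒟 and ℬ be closed subspaces of a complex Hilbert space with orthogonal projections D and B, and suppose the minimum angle θ₀ := inf{θ(f,g) : 0 ≠ f ∈ ℬ, 0 ≠ g ∈ 𝒟} is positive. Then for any f ≠ 0 with Df ≠ 0 and Bf ≠ 0, setting α = ‖Df‖/‖f‖ and β = ‖Bf‖/‖f‖, one has arccos α + arccos β ≥ θ₀. -/
set_option maxHeartbeats 1600000 in
/-- Uncertainty principle for subspaces forming a positive minimum angle: with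
`α = ‖Df‖/‖f‖`, `β = ‖Bf‖/‖f‖`, one has `arccos α + arccos β ≥ θ₀`. -/
theorem uncertainty_minimum_angle
    {H : Type*} [NormedAddCommGroup H] [InnerProductSpace ℂ H] [CompleteSpace H]
    (𝒟 ℬ : Submodule ℂ H) [CompleteSpace 𝒟] [CompleteSpace ℬ]
    (D B : H →L[ℂ] H)
    (hD : D = 𝒟.subtypeL.comp 𝒟.orthogonalProjectionOnto)
    (hB : B = ℬ.subtypeL.comp ℬ.orthogonalProjectionOnto)
    (θ₀ : ℝ)
    (hθ₀ : θ₀ = sInf {θ : ℝ | ∃ f ∈ ℬ, ∃ g ∈ 𝒟, f ≠ 0 ∧ g ≠ 0 ∧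
      θ = Real.arccos ((inner ℂ f g : ℂ).re / (‖f‖ * ‖g‖))})
    (hpos : 0 < θ₀)
    (f : H) (hf : f ≠ 0) (hDf : D f ≠ 0) (hBf : B f ≠ 0) :
    Real.arccos (‖D f‖ / ‖f‖) + Real.arccos (‖B f‖ / ‖f‖) ≥ θ₀ := by
  set a : ℝ := ‖D f‖ with ha
  set b : ℝ := ‖B f‖ with hb
  set n : ℝ := ‖f‖ with hn
  have hapos : 0 < a := norm_pos_iff.mpr hDf
  have hbpos : 0 < b := norm_pos_iff.mpr hBf
  have hnpos : 0 < n := norm_pos_iff.mpr hf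
  have hn0 : n ≠ 0 := ne_of_gt hnpos
  -- memberships
  have hBmem : B f ∈ ℬ := by
    rw [hB, ContinuousLinearMap.comp_apply, Submodule.subtypeL_apply]
    exact Submodule.coe_mem _
  have hDmem : D f ∈ 𝒟 := by
    rw [hD, ContinuousLinearMap.comp_apply, Submodule.subtypeL_apply]
    exact Submodule.coe_mem _
  -- f - B f ⟂ ℬ, f - D f ⟂ 𝒟
  have hBorth : f - B f ∈ ℬᗮ := by
    rw [hB, ContinuousLinearMap.comp_apply, Submodule.subtypeL_apply]
    exact Submodule.sub_starProjection_mem_orthogonal f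
  have hDorth : f - D f ∈ 𝒟ᗮ := by
    rw [hD, ContinuousLinearMap.comp_apply, Submodule.subtypeL_apply]
    exact Submodule.sub_starProjection_mem_orthogonal f
  -- inner product facts
  have hBf0 : (inner ℂ (B f) (f - B f) : ℂ) = 0 :=
    (Submodule.mem_orthogonal ℬ _).1 hBorth (B f) hBmem
  have hDf0 : (inner ℂ (D f) (f - D f) : ℂ) = 0 :=
    (Submodule.mem_orthogonal 𝒟 _).1 hDorth (D f) hDmem
  have hBff : (inner ℂ (B f) f : ℂ) = (b : ℂ) ^ 2 := by
    have := hBf0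
    rw [inner_sub_right, sub_eq_zero] at this
    rw [this, inner_self_eq_norm_sq_to_K]; norm_cast
  have hDff : (inner ℂ (D f) f : ℂ) = (a : ℂ) ^ 2 := by
    have := hDf0
    rw [inner_sub_right, sub_eq_zero] at this
    rw [this, inner_self_eq_norm_sq_to_K]; norm_cast
  have hfBf : (inner ℂ f (B f) : ℂ) = (b : ℂ) ^ 2 := by
    rw [← inner_conj_symm, hBff]; simp
  have hfDf : (inner ℂ f (D f) : ℂ) = (a : ℂ) ^ 2 := by
    rw [← inner_conj_symm, hDff]; simp
  have hff : (inner ℂ f f : ℂ) = (n : ℂ) ^ 2 := inner_self_eq_norm_sq_to_K f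
  -- auxiliary vectors
  set u : H := B f - ((b ^ 2 / n ^ 2 : ℝ) : ℂ) • f with hu
  set v : H := D f - ((a ^ 2 / n ^ 2 : ℝ) : ℂ) • f with hv
  have hnC : (n : ℂ) ≠ 0 := by exact_mod_cast hn0
  have hBB : (inner ℂ (B f) (B f) : ℂ) = ((b ^ 2 : ℝ) : ℂ) := by
    rw [inner_self_eq_norm_sq_to_K]; norm_cast
  have hDD : (inner ℂ (D f) (D f) : ℂ) = ((a ^ 2 : ℝ) : ℂ) := by
    rw [inner_self_eq_norm_sq_to_K]; norm_cast
  have huu : (inner ℂ u u : ℂ) = ((b ^ 2 - b ^ 4 / n ^ 2 : ℝ) : ℂ) := by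
    rw [hu, inner_sub_left, inner_sub_right, inner_sub_right, inner_smul_left,
      inner_smul_right, inner_smul_left, inner_smul_right, hBff, hfBf, hff, hBB,
      Complex.conj_ofReal]
    push_cast
    field_simp
    ring
  have hvv : (inner ℂ v v : ℂ) = ((a ^ 2 - a ^ 4 / n ^ 2 : ℝ) : ℂ) := by
    rw [hv, inner_sub_left, inner_sub_right, inner_sub_right, inner_smul_left,
      inner_smul_right, inner_smul_left, inner_smul_right, hDff, hfDf, hff, hDD,
      Complex.conj_ofReal]
    push_cast
    field_simp
    ring
  have hnu : ‖u‖ ^ 2 = b ^ 2 - b ^ 4 / n ^ 2 := by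
    have h1 : ((inner ℂ u u : ℂ)).re = ‖u‖ ^ 2 := by
      rw [inner_self_eq_norm_sq_to_K]; norm_cast
    rw [← h1, huu, Complex.ofReal_re]
  have hnv : ‖v‖ ^ 2 = a ^ 2 - a ^ 4 / n ^ 2 := by
    have h1 : ((inner ℂ v v : ℂ)).re = ‖v‖ ^ 2 := by
      rw [inner_self_eq_norm_sq_to_K]; norm_cast
    rw [← h1, hvv, Complex.ofReal_re]
  -- bounds a ≤ n, b ≤ n
  have hu0 : (0:ℝ) ≤ ‖u‖ ^ 2 := sq_nonneg _
  have hv0 : (0:ℝ) ≤ ‖v‖ ^ 2 := sq_nonneg _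
  have hb2 : b ^ 2 ≤ n ^ 2 := by
    rw [hnu] at hu0
    have h : b ^ 4 / n ^ 2 ≤ b ^ 2 := by linarith
    have h2 : b ^ 4 ≤ b ^ 2 * n ^ 2 := (div_le_iff₀ (by positivity)).1 h
    nlinarith [mul_pos hbpos hbpos]
  have ha2 : a ^ 2 ≤ n ^ 2 := by
    rw [hnv] at hv0
    have h : a ^ 4 / n ^ 2 ≤ a ^ 2 := by linarith
    have h2 : a ^ 4 ≤ a ^ 2 * n ^ 2 := (div_le_iff₀ (by positivity)).1 h
    nlinarith [mul_pos hapos hapos]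
  have hb_le : b ≤ n := by
    have := Real.sqrt_le_sqrt hb2
    rwa [Real.sqrt_sq hbpos.le, Real.sqrt_sq hnpos.le] at this
  have ha_le : a ≤ n := by
    have := Real.sqrt_le_sqrt ha2
    rwa [Real.sqrt_sq hapos.le, Real.sqrt_sq hnpos.le] at this
  have han1 : a / n ≤ 1 := (div_le_one hnpos).2 ha_le
  have hbn1 : b / n ≤ 1 := (div_le_one hnpos).2 hb_le
  have han0 : 0 ≤ a / n := by positivity
  have hbn0 : 0 ≤ b / n := by positivity
  set sa : ℝ := Real.sqrt (1 - (a / n) ^ 2) with hsa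
  set sb : ℝ := Real.sqrt (1 - (b / n) ^ 2) with hsb
  have hnu' : ‖u‖ = b * sb := by
    have h2 : ‖u‖ = Real.sqrt (‖u‖ ^ 2) := (Real.sqrt_sq (norm_nonneg u)).symm
    rw [h2, hnu, show b ^ 2 - b ^ 4 / n ^ 2 = b ^ 2 * (1 - (b / n) ^ 2) by
      field_simp]
    rw [Real.sqrt_mul (sq_nonneg b), Real.sqrt_sq hbpos.le, hsb]
  have hnv' : ‖v‖ = a * sa := by
    have h2 : ‖v‖ = Real.sqrt (‖v‖ ^ 2) := (Real.sqrt_sq (norm_nonneg v)).symm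
    rw [h2, hnv, show a ^ 2 - a ^ 4 / n ^ 2 = a ^ 2 * (1 - (a / n) ^ 2) by
      field_simp]
    rw [Real.sqrt_mul (sq_nonneg a), Real.sqrt_sq hapos.le, hsa]
  -- inner ℂ u v
  have huv : (inner ℂ u v : ℂ) = inner ℂ (B f) (D f) - ((a ^ 2 * b ^ 2 / n ^ 2 : ℝ) : ℂ) := by
    rw [hu, hv, inner_sub_left, inner_sub_right, inner_sub_right, inner_smul_left,
      inner_smul_right, inner_smul_left, inner_smul_right, hBff, hfDf, hff,
      Complex.conj_ofReal]
    push_cast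
    field_simp
    ring
  -- Cauchy-Schwarz lower bound on the real part
  have hre : a ^ 2 * b ^ 2 / n ^ 2 - ‖u‖ * ‖v‖ ≤ (inner ℂ (B f) (D f) : ℂ).re := by
    have hcs : ‖(inner ℂ u v : ℂ)‖ ≤ ‖u‖ * ‖v‖ := norm_inner_le_norm u v
    have habs : |((inner ℂ u v : ℂ)).re| ≤ ‖(inner ℂ u v : ℂ)‖ := Complex.abs_re_le_norm _
    have h3 : -(‖u‖ * ‖v‖) ≤ ((inner ℂ u v : ℂ)).re := by
      have := abs_le.1 (habs.trans hcs)
      linarith [this.1]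
    rw [huv] at h3
    simp only [Complex.sub_re, Complex.ofReal_re] at h3
    linarith
  set s : ℝ := Real.arccos (a / n) + Real.arccos (b / n) with hs
  have hcos : Real.cos s = (a / n) * (b / n) - sa * sb := by
    rw [hs, Real.cos_add, Real.cos_arccos (by linarith) han1,
      Real.cos_arccos (by linarith) hbn1, Real.sin_arccos, Real.sin_arccos]
  have hkey : Real.cos s * (b * a) ≤ (inner ℂ (B f) (D f) : ℂ).re := by
    have heq : Real.cos s * (b * a) = a ^ 2 * b ^ 2 / n ^ 2 - (b * sb) * (a * sa) := by
      rw [hcos]; field_simp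
    rw [heq, ← hnu', ← hnv']
    exact hre
  have hs0 : 0 ≤ s := by
    rw [hs]
    have h1 := Real.arccos_nonneg (a / n); have h2 := Real.arccos_nonneg (b / n)
    linarith
  have hsπ : s ≤ Real.pi := by
    rw [hs]
    have h1 := Real.arccos_le_pi_div_two.2 han0
    have h2 := Real.arccos_le_pi_div_two.2 hbn0
    linarith
  have hanti : ∀ x y : ℝ, x ≤ y → Real.arccos y ≤ Real.arccos x := by
    intro x y hxy
    simp only [Real.arccos]
    linarith [Real.monotone_arcsin hxy]
  have hstep2 : Real.arccos ((inner ℂ (B f) (D f) : ℂ).re / (b * a)) ≤ s := by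
    have hba : (0:ℝ) < b * a := mul_pos hbpos hapos
    have h1 : Real.cos s ≤ (inner ℂ (B f) (D f) : ℂ).re / (b * a) :=
      (le_div_iff₀ hba).2 hkey
    have h2 := hanti _ _ h1
    rwa [Real.arccos_cos hs0 hsπ] at h2
  have hstep1 : θ₀ ≤ Real.arccos ((inner ℂ (B f) (D f) : ℂ).re / (b * a)) := by
    rw [hθ₀]
    apply csInf_le
    · refine ⟨0, ?_⟩
      rintro θ ⟨x, hx, y, hy, hx0, hy0, rfl⟩
      exact Real.arccos_nonneg _
    · exact ⟨B f, hBmem, D f, hDmem, hBf, hDf, rfl⟩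
  exact le_trans hstep1 hstep2
end

section
/- (Donoho–Stark-type generalized uncertainty) Let f ∈ L¹(ℝ³) ∩ L²(ℝ³) and f̂ ∈ L²(ℝ³) ∩ L^∞(ℝ³) with f ≠ 0 (in L²), and suppose (1) ‖f‖₂ = α‖f̂‖₂ and (2) ‖f̂‖_∞ ≤ β‖f‖₁ for constants α, β > 0. Suppose further that f is ε_T-concentrated on a measurable set V_T in L¹ norm (∫_{V_T}|f| ≥ (1−ε_T)‖f‖₁ with 0 ≤ ε_T < 1) and f̂ is ε_R-concentrated on a measurable set V_R in L² norm (∫_{V_R}|f̂|² ≥ (1−ε_R²)‖f̂‖₂² with 0 ≤ ε_R < 1). Then |V_T|·|V_R|·α²·β² ≥ (1−ε_T)²(1−ε_R²), where |V| denotes Lebesgue measure. -/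
open MeasureTheory

set_option maxHeartbeats 1000000 in
/-- Donoho–Stark-type generalized uncertainty principle on ℝ³:
`|V_T|·|V_R|·α²·β² ≥ (1−ε_T)²·(1−ε_R²)`. -/
theorem generalized_uncertainty
    (f fhat : EuclideanSpace ℝ (Fin 3) → ℂ)
    (hf1 : Integrable f) (hf2 : Integrable (fun x => ‖f x‖ ^ 2))
    (hfhat2 : Integrable (fun x => ‖fhat x‖ ^ 2))
    (hfne : 0 < ∫ x, ‖f x‖ ^ 2)
    (α β : ℝ) (hα : 0 < α) (hβ : 0 < β)
    (h1 : Real.sqrt (∫ x, ‖f x‖ ^ 2) = α * Real.sqrt (∫ x, ‖fhat x‖ ^ 2))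
    (h2 : ∀ᵐ x, ‖fhat x‖ ≤ β * ∫ y, ‖f y‖)
    (VT VR : Set (EuclideanSpace ℝ (Fin 3)))
    (hVT : MeasurableSet VT) (hVR : MeasurableSet VR)
    (hVTfin : volume VT < ⊤) (hVRfin : volume VR < ⊤)
    (εT εR : ℝ) (hεT : 0 ≤ εT) (hεT1 : εT < 1) (hεR : 0 ≤ εR) (hεR1 : εR < 1)
    (hconcT : (∫ x in VT, ‖f x‖) ≥ (1 - εT) * ∫ x, ‖f x‖)
    (hconcR : (∫ x in VR, ‖fhat x‖ ^ 2) ≥ (1 - εR ^ 2) * ∫ x, ‖fhat x‖ ^ 2) :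
    (volume VT).toReal * (volume VR).toReal * α ^ 2 * β ^ 2 ≥
      (1 - εT) ^ 2 * (1 - εR ^ 2) := by
  set A := ∫ x, ‖f x‖ ^ 2 with hA
  set B := ∫ x, ‖fhat x‖ ^ 2 with hB
  set C := ∫ x, ‖f x‖ with hC
  set T := (volume VT).toReal with hT
  set R := (volume VR).toReal with hR
  have hBnn : 0 ≤ B := integral_nonneg fun x => by positivity
  have hCnn : 0 ≤ C := integral_nonneg fun x => norm_nonneg _
  have hTnn : 0 ≤ T := ENNReal.toReal_nonneg
  -- B > 0
  have hBpos : 0 < B := by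
    have h := Real.sqrt_pos.mpr hfne
    rw [h1] at h
    have hs : 0 < Real.sqrt B := by nlinarith [Real.sqrt_nonneg B]
    exact Real.sqrt_pos.mp hs
  -- A = α² B
  have hAB : A = α ^ 2 * B := by
    have : Real.sqrt A ^ 2 = (α * Real.sqrt B) ^ 2 := by rw [h1]
    rwa [Real.sq_sqrt hfne.le, mul_pow, Real.sq_sqrt hBnn] at this
  -- C > 0
  have hCpos : 0 < C := by
    rcases lt_or_eq_of_le hCnn with h | h
    · exact h
    · exfalso
      have hz : ∀ᵐ x, ‖fhat x‖ ^ 2 = 0 := by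
        filter_upwards [h2] with x hx
        have hx0 : ‖fhat x‖ ≤ 0 := by rw [← h] at hx; simpa using hx
        have : ‖fhat x‖ = 0 := le_antisymm hx0 (norm_nonneg _)
        simp [this]
      have : B = 0 := by
        rw [hB, integral_congr_ae hz, integral_zero]
      linarith
  -- instance finite measures on restrictions
  haveI : Fact (volume VT < ⊤) := ⟨hVTfin⟩
  haveI : Fact (volume VR < ⊤) := ⟨hVRfin⟩
  -- Step (i): (1-εR²)·B ≤ R·(β·C)²
  have keyR : (1 - εR ^ 2) * B ≤ R * (β * C) ^ 2 := by
    have hle : (∫ x in VR, ‖fhat x‖ ^ 2) ≤ ∫ _x in VR, (β * C) ^ 2 := by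
      refine integral_mono_ae (hfhat2.restrict) (integrable_const _) ?_
      filter_upwards [ae_restrict_of_ae h2] with x hx
      have h0 : (0:ℝ) ≤ ‖fhat x‖ := norm_nonneg _
      nlinarith
    rw [setIntegral_const, smul_eq_mul] at hle
    exact le_trans hconcR hle
  -- Step (ii): ((1-εT)·C)² ≤ T·A  (Cauchy–Schwarz)
  have keyT : ((1 - εT) * C) ^ 2 ≤ T * A := by
    have hmem : MemLp (fun x => ‖f x‖) 2 (volume.restrict VT) :=
      ((memLp_two_iff_integrable_sq (hf1.norm.aestronglyMeasurable.restrict)).mpr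
        hf2.restrict)
    have hmem1 : MemLp (fun _ : EuclideanSpace ℝ (Fin 3) => (1:ℝ)) 2
        (volume.restrict VT) := memLp_const 1
    have hcs := integral_mul_le_Lp_mul_Lq_of_nonneg ((Real.HolderConjugate.two_two : Real.HolderConjugate 2 2))
      (f := fun x => ‖f x‖) (g := fun _ => (1:ℝ))
      (Filter.Eventually.of_forall fun x => norm_nonneg _)
      (Filter.Eventually.of_forall fun _ => zero_le_one)
      (by rw [show ENNReal.ofReal (2:ℝ) = 2 by norm_num]; exact hmem)
      (by rw [show ENNReal.ofReal (2:ℝ) = 2 by norm_num]; exact hmem1)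
    simp only [mul_one, Real.one_rpow] at hcs
    have h2r : ((2:ℝ)) ≠ 0 := two_ne_zero
    have hInt2 : (∫ x in VT, ‖f x‖ ^ (2:ℝ)) = ∫ x in VT, ‖f x‖ ^ 2 := by
      refine integral_congr_ae (Filter.Eventually.of_forall fun x => ?_)
      show ‖f x‖ ^ (2:ℝ) = ‖f x‖ ^ 2
      rw [show (2:ℝ) = ((2:ℕ):ℝ) by norm_num, Real.rpow_natCast]
    have hIntc : (∫ _x in VT, (1:ℝ)) = T := by
      rw [setIntegral_const, smul_eq_mul, mul_one]; rfl
    rw [hInt2, hIntc] at hcs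
    have hS2nn : 0 ≤ ∫ x in VT, ‖f x‖ ^ 2 := integral_nonneg fun x => by positivity
    have hsq : (∫ x in VT, ‖f x‖) ^ 2 ≤ (∫ x in VT, ‖f x‖ ^ 2) * T := by
      have := mul_le_mul hcs hcs (integral_nonneg fun x => norm_nonneg _)
        (mul_nonneg (Real.rpow_nonneg hS2nn _) (Real.rpow_nonneg hTnn _))
      calc (∫ x in VT, ‖f x‖) ^ 2 = (∫ x in VT, ‖f x‖) * (∫ x in VT, ‖f x‖) := sq _
        _ ≤ ((∫ x in VT, ‖f x‖ ^ 2) ^ (1/(2:ℝ)) * T ^ (1/(2:ℝ))) *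
            ((∫ x in VT, ‖f x‖ ^ 2) ^ (1/(2:ℝ)) * T ^ (1/(2:ℝ))) := this
        _ = (∫ x in VT, ‖f x‖ ^ 2) * T := by
            rw [mul_mul_mul_comm, ← Real.rpow_add' hS2nn (by norm_num),
              ← Real.rpow_add' hTnn (by norm_num)]
            norm_num
    have hsub : (∫ x in VT, ‖f x‖ ^ 2) ≤ A :=
      setIntegral_le_integral hf2 (Filter.Eventually.of_forall fun x => by positivity)
    have h1T : ((1 - εT) * C) ^ 2 ≤ (∫ x in VT, ‖f x‖) ^ 2 := by
      have h0 : 0 ≤ (1 - εT) * C := mul_nonneg (by linarith) hCnn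
      exact pow_le_pow_left₀ h0 hconcT 2
    nlinarith
  -- combine
  have hP : (0:ℝ) < (1 - εT) ^ 2 := pow_pos (by linarith) 2
  have hQ : (0:ℝ) < 1 - εR ^ 2 := by nlinarith
  rw [hAB] at keyT
  have hRnn : 0 ≤ R := ENNReal.toReal_nonneg
  -- (1-εR²) B ≤ R β² C²  and (1-εT)² C² ≤ α² B T
  nlinarith [mul_le_mul keyR keyT (sq_nonneg ((1 - εT) * C)) (mul_nonneg hRnn (sq_nonneg (β * C))),
    mul_pos hBpos (mul_pos hCpos hCpos), sq_nonneg (β * C), sq_nonneg ((1-εT)*C)]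
end

section
/- Under the hypotheses of the generalized uncertainty theorem with ε_T = 0 (f perfectly concentrated on V_T, i.e., f vanishes a.e. outside V_T), one obtains |V_T|·|V_R|·α²·β² ≥ 1 − ε_R². -/
open MeasureTheory

/-- Volumetric communication uncertainty: with `ε_T = 0` (f supported a.e. in `V_T`),
`|V_T|·|V_R|·α²·β² ≥ 1 − ε_R²`. -/
theorem volumetric_communication_uncertainty
    (f fhat : EuclideanSpace ℝ (Fin 3) → ℂ)
    (hf1 : Integrable f) (hf2 : Integrable (fun x => ‖f x‖ ^ 2))
    (hfhat2 : Integrable (fun x => ‖fhat x‖ ^ 2))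
    (hfne : 0 < ∫ x, ‖f x‖ ^ 2)
    (α β : ℝ) (hα : 0 < α) (hβ : 0 < β)
    (h1 : Real.sqrt (∫ x, ‖f x‖ ^ 2) = α * Real.sqrt (∫ x, ‖fhat x‖ ^ 2))
    (h2 : ∀ᵐ x, ‖fhat x‖ ≤ β * ∫ y, ‖f y‖)
    (VT VR : Set (EuclideanSpace ℝ (Fin 3)))
    (hVT : MeasurableSet VT) (hVR : MeasurableSet VR)
    (hVTfin : volume VT < ⊤) (hVRfin : volume VR < ⊤)
    (hsupp : ∀ᵐ x, x ∉ VT → f x = 0)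
    (εR : ℝ) (hεR : 0 ≤ εR) (hεR1 : εR < 1)
    (hconcR : (∫ x in VR, ‖fhat x‖ ^ 2) ≥ (1 - εR ^ 2) * ∫ x, ‖fhat x‖ ^ 2) :
    (volume VT).toReal * (volume VR).toReal * α ^ 2 * β ^ 2 ≥ 1 - εR ^ 2 := by
  set I : ℝ := ∫ x, ‖fhat x‖ ^ 2 with hIdef
  set F2 : ℝ := ∫ x, ‖f x‖ ^ 2 with hF2def
  set L : ℝ := ∫ y, ‖f y‖ with hLdef
  set T : ℝ := (volume VT).toReal with hTdef
  set R : ℝ := (volume VR).toReal with hRdef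
  have hTnn : 0 ≤ T := ENNReal.toReal_nonneg
  have hRnn : 0 ≤ R := ENNReal.toReal_nonneg
  have hInn : 0 ≤ I := integral_nonneg fun x => by positivity
  have hLnn : 0 ≤ L := integral_nonneg fun x => norm_nonneg _
  -- I > 0
  have hIpos : 0 < I := by
    rcases lt_or_eq_of_le hInn with h | h
    · exact h
    · exfalso
      have h1' := h1
      rw [← h, Real.sqrt_zero, mul_zero] at h1'
      exact (Real.sqrt_pos.mpr hfne).ne' h1'
  -- F2 = α² I
  have hFeq : F2 = α ^ 2 * I := by
    have h := congrArg (fun t => t ^ 2) h1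
    simpa [mul_pow, Real.sq_sqrt hfne.le, Real.sq_sqrt hInn] using h
  -- L equals the integral over VT
  have hLVT : L = ∫ y in VT, ‖f y‖ := by
    rw [hLdef, setIntegral_eq_integral_of_ae_compl_eq_zero]
    filter_upwards [hsupp] with x hx h
    simp [hx h]
  have hF2VT : (∫ y in VT, ‖f y‖ ^ 2) ≤ F2 := by
    apply setIntegral_le_integral hf2
    filter_upwards with x using by positivity
  have hfinT : IsFiniteMeasure (volume.restrict VT) :=
    ⟨by rwa [Measure.restrict_apply_univ]⟩
  have hmem : MemLp f (ENNReal.ofReal 2) (volume.restrict VT) := by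
    rw [ENNReal.ofReal_ofNat]
    exact (memLp_two_iff_integrable_sq_norm
      (hf1.aestronglyMeasurable.restrict)).mpr (hf2.restrict (s := VT))
  have hmem1 : MemLp (fun _ : EuclideanSpace ℝ (Fin 3) => (1 : ℂ))
      (ENNReal.ofReal 2) (volume.restrict VT) :=
    memLp_const 1
  have hconj : (2:ℝ).HolderConjugate 2 := ⟨by norm_num, by norm_num, by norm_num⟩
  have hCS := integral_mul_norm_le_Lp_mul_Lq (μ := volume.restrict VT) (g := fun _ => (1:ℂ)) hconj hmem hmem1
  -- simplify Hölder
  have hCS' : L ≤ Real.sqrt (∫ y in VT, ‖f y‖ ^ 2) * Real.sqrt T := by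
    have e1 : ∫ a in VT, ‖f a‖ * ‖(1:ℂ)‖ = L := by
      rw [hLVT]; simp
    have e2 : (∫ a in VT, ‖f a‖ ^ (2:ℝ)) = ∫ y in VT, ‖f y‖ ^ 2 := by
      norm_num [Real.rpow_natCast]
    have e3 : (∫ _ in VT, ‖(1:ℂ)‖ ^ (2:ℝ)) = T := by
      simp [hTdef, Measure.real]
    rw [e1, e2, e3] at hCS
    calc L ≤ (∫ y in VT, ‖f y‖ ^ 2) ^ ((1:ℝ)/2) * T ^ ((1:ℝ)/2) := hCS
      _ = Real.sqrt (∫ y in VT, ‖f y‖ ^ 2) * Real.sqrt T := by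
          rw [← Real.sqrt_eq_rpow, ← Real.sqrt_eq_rpow]
  -- hence L² ≤ T * F2
  have hL2 : L ^ 2 ≤ T * F2 := by
    have hs : Real.sqrt (∫ y in VT, ‖f y‖ ^ 2) * Real.sqrt T
        = Real.sqrt ((∫ y in VT, ‖f y‖ ^ 2) * T) := (Real.sqrt_mul
          (integral_nonneg fun x => by positivity) T).symm
    have h := sq_le_sq' (by linarith [Real.sqrt_nonneg ((∫ y in VT, ‖f y‖ ^ 2) * T)] :
        -(Real.sqrt ((∫ y in VT, ‖f y‖ ^ 2) * T)) ≤ L) (hs ▸ hCS')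
    rw [Real.sq_sqrt (mul_nonneg (integral_nonneg fun x => by positivity) hTnn)] at h
    nlinarith
  -- bound the VR integral
  have hVRbd : (∫ x in VR, ‖fhat x‖ ^ 2) ≤ R * (β * L) ^ 2 := by
    have hfinR : IsFiniteMeasure (volume.restrict VR) :=
      ⟨by rwa [Measure.restrict_apply_univ]⟩
    have hb : ∀ᵐ x ∂(volume.restrict VR), ‖fhat x‖ ^ 2 ≤ (β * L) ^ 2 := by
      filter_upwards [ae_restrict_of_ae h2] with x hx
      have : 0 ≤ β * L := mul_nonneg hβ.le hLnn
      nlinarith [norm_nonneg (fhat x)]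
    calc (∫ x in VR, ‖fhat x‖ ^ 2) ≤ ∫ _ in VR, (β * L) ^ 2 :=
          integral_mono_ae (hfhat2.restrict (s := VR)) (integrable_const _) hb
      _ = R * (β * L) ^ 2 := by rw [setIntegral_const]; simp [hRdef, Measure.real]
  -- combine
  have hchain : (1 - εR ^ 2) * I ≤ R * β ^ 2 * (T * (α ^ 2 * I)) := by
    calc (1 - εR ^ 2) * I ≤ ∫ x in VR, ‖fhat x‖ ^ 2 := hconcR
      _ ≤ R * (β * L) ^ 2 := hVRbd
      _ = R * β ^ 2 * L ^ 2 := by ring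
      _ ≤ R * β ^ 2 * (T * F2) := by
          apply mul_le_mul_of_nonneg_left hL2 (by positivity)
      _ = R * β ^ 2 * (T * (α ^ 2 * I)) := by rw [hFeq]
  have : (1 - εR ^ 2) ≤ T * R * α ^ 2 * β ^ 2 := by
    have := (mul_le_mul_iff_of_pos_right hIpos).mp (by linarith : (1 - εR ^ 2) * I ≤
      (T * R * α ^ 2 * β ^ 2) * I)
    linarith
  linarith
end
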